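/- Let L(λ) be the Lax matrix of the first Hénon-Heiles system with entries L11 = p2/2 + p1*q1/(2λ), L12 = λ - 2*q2 - q1^2/λ, L21 = a*λ^2 + 2*a*q2*λ + a*(q1^2 + 4*q2^2) + p1^2/(4λ), L22 = -L11, and let f(λ) = p2/2 + p1*(λ - 2*q2)/(2*q1). Then for all λ for which L12(λ) ≠ 0 and q1 ≠ 0, the rational expression 4*L21(λ) + 4*(L11(λ)^2 - f(λ)^2)/L12(λ) equals the quadratic polynomial 4*a*λ^2 + ((8*a*q1^2*q2 - p1^2)/q1^2)*λ + 4*a*(q1^2 + 4*q2^2) + 2*p1*(p1*q2 - p2*q1)/q1^2. -/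

import Mathlib

theorem transformed_lax_entry_is_polynomial (a q1 q2 p1 p2 lam : ℝ)
    (hl : lam ≠ 0) (hq : q1 ≠ 0)
    (hL12 : lam - 2 * q2 - q1^2 / lam ≠ 0) :
    let L11 := p2 / 2 + p1 * q1 / (2 * lam)
    let L12 := lam - 2 * q2 - q1^2 / lam
    let L21 := a * lam^2 + 2 * a * q2 * lam + a * (q1^2 + 4 * q2^2) + p1^2 / (4 * lam)
    let f := p2 / 2 + p1 * (lam - 2 * q2) / (2 * q1)
    4 * L21 + 4 * (L11^2 - f^2) / L12
      = 4 * a * lam^2 + ((8 * a * q1^2 * q2 - p1^2) / q1^2) * lam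
        + 4 * a * (q1^2 + 4 * q2^2) + 2 * p1 * (p1 * q2 - p2 * q1) / q1^2 := by
  intro L11 L12 L21 f
  have h : lam * lam - 2 * q2 * lam - q1^2 ≠ 0 := by
    intro h0
    apply hL12
    field_simp [L12]
    linarith
  have hrw : L12 = (lam * lam - 2 * q2 * lam - q1^2) / lam := by
    simp only [L12]; field_simp
  simp only [L11, L21, f, hrw, div_div_eq_mul_div, div_div]
  have h'' : lam * (lam - 2 * q2) - q1 ^ 2 ≠ 0 := by
    intro e; apply h; linear_combination e
  field_simp
  ring
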